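/- Hölder-type lower bound: for t ∈ ℝ^N with t_k > 0, q ≥ 1, and any u ∈ (0,∞)^N, one has ∑_k t_k²/u_k + (∑_k u_k^q)^{1/q} ≥ 2(∑_k t_k^{2q/(q+1)})^{(q+1)/(2q)}. -/

import Mathlib

open Finset

/-- Hölder-type lower bound: for `t_k > 0`, `q ≥ 1`, and any `u ∈ (0,∞)^N`,
`∑ t_k²/u_k + (∑ u_k^q)^{1/q} ≥ 2 (∑ t_k^{2q/(q+1)})^{(q+1)/(2q)}`. -/
theorem spice_holder_lower_bound (N : ℕ) (t : Fin N → ℝ) (q : ℝ)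
    (ht : ∀ k, 0 < t k) (hq : 1 ≤ q) :
    ∀ u : Fin N → ℝ, (∀ k, 0 < u k) →
      2 * (∑ k, (t k) ^ (2 * q / (q + 1))) ^ ((q + 1) / (2 * q)) ≤
        ∑ k, (t k) ^ 2 / u k + (∑ k, (u k) ^ q) ^ (1 / q) := by
  intro u hu
  have hq0 : (0:ℝ) < q := lt_of_lt_of_le one_pos hq
  have hq1 : (0:ℝ) < q + 1 := by linarith
  set A := ∑ k, (t k) ^ 2 / u k with hA
  set B := (∑ k, (u k) ^ q) ^ (1 / q) with hB
  have hAnn : 0 ≤ A := Finset.sum_nonneg fun k _ =>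
    div_nonneg (sq_nonneg _) (hu k).le
  have hUq : 0 ≤ ∑ k, (u k) ^ q :=
    Finset.sum_nonneg fun k _ => Real.rpow_nonneg (hu k).le _
  have hBnn : 0 ≤ B := Real.rpow_nonneg hUq _
  -- Hölder with conjugate exponents (q+1)/q and q+1
  have hpq : Real.HolderConjugate ((q+1)/q) (q+1) := by
    refine ⟨?_, by positivity, by positivity⟩
    rw [inv_div, inv_one, ← one_div, ← add_div, div_self hq1.ne']
  have hold := Real.inner_le_Lp_mul_Lq Finset.univ
    (fun k => ((t k) ^ 2 / u k) ^ (q/(q+1)))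
    (fun k => (u k) ^ (q/(q+1))) hpq
  have hfg : ∀ k : Fin N, ((t k) ^ 2 / u k) ^ (q/(q+1)) * (u k) ^ (q/(q+1))
      = (t k) ^ (2 * q / (q + 1)) := by
    intro k
    rw [← Real.mul_rpow (div_nonneg (sq_nonneg _) (hu k).le) (hu k).le,
      div_mul_cancel₀ _ (hu k).ne', ← Real.rpow_natCast (t k) 2,
      ← Real.rpow_mul (ht k).le]
    norm_num [mul_div_assoc]
  have hf : ∀ k : Fin N, |((t k) ^ 2 / u k) ^ (q/(q+1))| ^ ((q+1)/q)
      = (t k) ^ 2 / u k := by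
    intro k
    have hx : (0:ℝ) ≤ (t k) ^ 2 / u k := div_nonneg (sq_nonneg _) (hu k).le
    rw [abs_of_nonneg (Real.rpow_nonneg hx _), ← Real.rpow_mul hx]
    rw [show q/(q+1) * ((q+1)/q) = 1 by field_simp, Real.rpow_one]
  have hg : ∀ k : Fin N, |(u k) ^ (q/(q+1))| ^ (q+1) = (u k) ^ q := by
    intro k
    rw [abs_of_nonneg (Real.rpow_nonneg (hu k).le _), ← Real.rpow_mul (hu k).le]
    rw [show q/(q+1) * (q+1) = q by field_simp]
  simp only [hfg, hf, hg] at hold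
  -- rewrite RHS of Hölder as (A*B)^(q/(q+1))
  have hRHS : A ^ (1 / ((q+1)/q)) * (∑ k, (u k) ^ q) ^ (1/(q+1))
      = (A * B) ^ (q/(q+1)) := by
    rw [Real.mul_rpow hAnn hBnn, one_div_div, hB, ← Real.rpow_mul hUq]
    rw [show 1/q * (q/(q+1)) = 1/(q+1) by field_simp]
  rw [hRHS] at hold
  have hSnn : 0 ≤ ∑ k, (t k) ^ (2 * q / (q + 1)) :=
    Finset.sum_nonneg fun k _ => Real.rpow_nonneg (ht k).le _
  have hstep : (∑ k, (t k) ^ (2 * q / (q + 1))) ^ ((q + 1) / (2 * q))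
      ≤ (A * B) ^ (1/2 : ℝ) := by
    calc (∑ k, (t k) ^ (2 * q / (q + 1))) ^ ((q + 1) / (2 * q))
        ≤ ((A * B) ^ (q/(q+1))) ^ ((q + 1) / (2 * q)) :=
          Real.rpow_le_rpow hSnn hold (by positivity)
      _ = (A * B) ^ (1/2 : ℝ) := by
          rw [← Real.rpow_mul (mul_nonneg hAnn hBnn)]
          rw [show q/(q+1) * ((q+1)/(2*q)) = 1/2 by field_simp]
  have hAB : 2 * (A * B) ^ (1/2 : ℝ) ≤ A + B := by
    rw [Real.mul_rpow hAnn hBnn, ← Real.sqrt_eq_rpow, ← Real.sqrt_eq_rpow]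
    nlinarith [two_mul_le_add_sq (Real.sqrt A) (Real.sqrt B),
      Real.sq_sqrt hAnn, Real.sq_sqrt hBnn]
  nlinarith [hstep, hAB]
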